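/- Let G be a graph on n ≥ 1 vertices with minimum degree δ(G) ≥ (2n−5)/3. Then for every 2-edge-coloring of G, the vertex set of G can be covered by the vertex sets of at most 2 monochromatic connected subgraphs, i.e., tc_2(G) ≤ 2. -/

import Mathlib

open SimpleGraph

/-- The subgraph of `G` consisting of edges of color `i` under edge-coloring `c`. -/
def monoSub {V : Type*} (G : SimpleGraph V) {r : ℕ} (c : Sym2 V → Fin r) (i : Fin r) :
    SimpleGraph V where
  Adj u v := G.Adj u v ∧ c s(u, v) = i
  symm := ⟨fun u v h => ⟨h.1.symm, by rw [Sym2.eq_swap]; exact h.2⟩⟩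
  loopless := ⟨fun u h => G.loopless.irrefl u h.1⟩

/-- `V(G)` can be covered by at most `s` monochromatic connected subgraphs. -/
def HasMonoCover {V : Type*} (G : SimpleGraph V) {r : ℕ} (c : Sym2 V → Fin r) (s : ℕ) : Prop :=
  ∃ t : ℕ, t ≤ s ∧ ∃ (f : Fin t → Set V) (col : Fin t → Fin r),
    (∀ j, ((monoSub G c (col j)).induce (f j)).Connected) ∧ (⋃ j, f j) = Set.univ

/-- `V(G)` can be partitioned into at most `s` monochromatic connected subgraphs. -/
def HasMonoPartition {V : Type*} (G : SimpleGraph V) {r : ℕ} (c : Sym2 V → Fin r) (s : ℕ) : Prop :=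
  ∃ t : ℕ, t ≤ s ∧ ∃ (f : Fin t → Set V) (col : Fin t → Fin r),
    (∀ j, ((monoSub G c (col j)).induce (f j)).Connected) ∧ (⋃ j, f j) = Set.univ ∧
    ∀ j j', j ≠ j' → Disjoint (f j) (f j')

/-- The independence number of `G`. -/
noncomputable def indepNum' {V : Type*} (G : SimpleGraph V) : ℕ :=
  sSup {k | ∃ s : Finset V, s.card = k ∧ ∀ u ∈ s, ∀ v ∈ s, u ≠ v → ¬ G.Adj u v}

lemma induce_reachSet_connected {V : Type*} (H : SimpleGraph V) (u : V) :
    (H.induce {v | H.Reachable u v}).Connected := by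
  classical
  apply H.induce_connected_of_patches u (show u ∈ {v | H.Reachable u v} from Reachable.refl u)
  intro v hv
  obtain ⟨w⟩ := (hv : H.Reachable u v)
  refine ⟨{x | x ∈ w.support}, ?_, w.start_mem_support, w.end_mem_support, ?_⟩
  · intro x hx
    exact ⟨w.takeUntil x hx⟩
  · exact w.connected_induce_support.preconnected _ _

theorem stmt9 {V : Type*} [Fintype V] (hn : 1 ≤ Fintype.card V)
    (G : SimpleGraph V) [DecidableRel G.Adj]
    (hδ : ∀ v : V, (2 * (Fintype.card V : ℝ) - 5) / 3 ≤ (G.degree v : ℝ))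
    (c : Sym2 V → Fin 2) :
    HasMonoCover G c 2 := by
  classical
  by_contra hno
  set E : Fin 2 → V → V → Prop := fun d => (monoSub G c d).Reachable with hEdef
  have Esymm : ∀ (d : Fin 2) {x y : V}, E d x y → E d y x := fun d _ _ h => Reachable.symm h
  have Etrans : ∀ (d : Fin 2) {x y z : V}, E d x y → E d y z → E d x z :=
    fun d _ _ _ h h' => Reachable.trans h h'
  -- If two reachability classes cover everything, we contradict `hno`.
  have N : ∀ (d e : Fin 2) (u w : V), ∃ v, ¬ E d u v ∧ ¬ E e w v := by
    intro d e u w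
    by_contra h
    push_neg at h
    apply hno
    refine ⟨2, le_rfl, ![{v | E d u v}, {v | E e w v}], ![d, e], ?_, ?_⟩
    · intro j
      fin_cases j
      · simpa using induce_reachSet_connected (monoSub G c d) u
      · simpa using induce_reachSet_connected (monoSub G c e) w
    · ext v
      simp only [Set.mem_iUnion, Set.mem_univ, iff_true]
      by_cases h0 : E d u v
      · exact ⟨0, h0⟩
      · exact ⟨1, h v h0⟩
  -- reachability-class finsets
  set F : Fin 2 → V → Finset V := fun d x => Finset.univ.filter (fun v => E d x v) with hFdef
  have memF : ∀ (d : Fin 2) (x : V), x ∈ F d x := by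
    intro d x
    simp only [hFdef, Finset.mem_filter, Finset.mem_univ, true_and]
    exact Reachable.refl x
  have degF : ∀ x : V, G.degree x + 2 ≤ (F 0 x).card + (F 1 x).card := by
    intro x
    have hsub : insert x (G.neighborFinset x) ⊆ F 0 x ∪ F 1 x := by
      intro v hv
      rcases Finset.mem_insert.mp hv with rfl | hv
      · exact Finset.mem_union_left _ (memF 0 v)
      · rw [mem_neighborFinset] at hv
        have h01 : ∀ i : Fin 2, i = 0 ∨ i = 1 := by decide
        have hmem : ∀ i : Fin 2, c s(x, v) = i → v ∈ F i x := by
          intro i hi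
          simp only [hFdef, Finset.mem_filter, Finset.mem_univ, true_and]
          exact Adj.reachable (show (monoSub G c i).Adj x v from ⟨hv, hi⟩)
        rcases h01 (c s(x, v)) with h | h
        · exact Finset.mem_union_left _ (hmem 0 h)
        · exact Finset.mem_union_right _ (hmem 1 h)
    have h1 : G.degree x + 1 ≤ (F 0 x ∪ F 1 x).card := by
      have hc := Finset.card_le_card hsub
      rwa [Finset.card_insert_of_notMem (by simp)] at hc
    have h2 : 1 ≤ (F 0 x ∩ F 1 x).card := by
      exact Finset.card_pos.mpr ⟨x, Finset.mem_inter.mpr ⟨memF 0 x, memF 1 x⟩⟩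
    have h3 := Finset.card_union_add_card_inter (F 0 x) (F 1 x)
    omega
  have disjF : ∀ (d : Fin 2) {x y : V}, ¬ E d x y → Disjoint (F d x) (F d y) := by
    intro d x y h
    rw [Finset.disjoint_left]
    intro v hvx hvy
    simp only [hFdef, Finset.mem_filter, Finset.mem_univ, true_and] at hvx hvy
    exact h (Etrans d hvx (Esymm d hvy))
  have sum3 : ∀ (d : Fin 2) (x y z : V), ¬ E d x y → ¬ E d x z → ¬ E d y z →
      (F d x).card + (F d y).card + (F d z).card ≤ Fintype.card V := by
    intro d x y z hxy hxz hyz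
    have d1 : Disjoint (F d x) (F d y) := disjF d hxy
    have d2 : Disjoint (F d x ∪ F d y) (F d z) :=
      Finset.disjoint_union_left.mpr ⟨disjF d hxz, disjF d hyz⟩
    calc (F d x).card + (F d y).card + (F d z).card
        = ((F d x ∪ F d y) ∪ F d z).card := by
          rw [Finset.card_union_of_disjoint d2, Finset.card_union_of_disjoint d1]
      _ ≤ (Finset.univ : Finset V).card := Finset.card_le_card (Finset.subset_univ _)
      _ = Fintype.card V := Finset.card_univ
  -- no three pairwise independent vertices
  have T : ∀ x y z : V, ¬ E 0 x y → ¬ E 1 x y → ¬ E 0 x z → ¬ E 1 x z →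
      ¬ E 0 y z → ¬ E 1 y z → False := by
    intro x y z h1 h2 h3 h4 h5 h6
    have s0 := sum3 0 x y z h1 h3 h5
    have s1 := sum3 1 x y z h2 h4 h6
    have dx := degF x
    have dy := degF y
    have dz := degF z
    have key : G.degree x + G.degree y + G.degree z + 6 ≤ 2 * Fintype.card V := by omega
    have keyR : (G.degree x : ℝ) + G.degree y + G.degree z + 6 ≤ 2 * Fintype.card V := by
      exact_mod_cast key
    have hx := hδ x
    have hy := hδ y
    have hz := hδ z
    linarith
  -- König-type case analysis
  have aux : ∀ a b p : V, ¬ E 0 a b → ¬ E 1 a b → ¬ E 0 a p → ¬ E 0 b p → E 1 a p → False := by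
    intro a b p hab0 hab1 hp1 hp2 hpb
    obtain ⟨q, hq1, hq2⟩ := N 1 1 a b
    have hq : E 0 a q ∨ E 0 b q := by
      by_contra h
      push_neg at h
      exact T a b q hab0 hab1 h.1 hq1 h.2 hq2
    rcases hq with hqa | hqb
    · -- triple q p b
      refine T q p b ?_ ?_ ?_ ?_ ?_ ?_
      · exact fun h => hp1 (Etrans 0 hqa h)
      · exact fun h => hq1 (Etrans 1 hpb (Esymm 1 h))
      · exact fun h => hab0 (Etrans 0 hqa h)
      · exact fun h => hq2 (Esymm 1 h)
      · exact fun h => hp2 (Esymm 0 h)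
      · exact fun h => hab1 (Etrans 1 hpb h)
    · obtain ⟨s, hs1, hs2⟩ := N 1 0 a b
      have hs : E 0 a s ∨ E 1 b s := by
        by_contra h
        push_neg at h
        exact T a b s hab0 hab1 h.1 hs1 hs2 h.2
      rcases hs with hsa | hsb
      · by_cases hb : E 1 s q
        · -- triple s p b
          refine T s p b ?_ ?_ ?_ ?_ ?_ ?_
          · exact fun h => hp1 (Etrans 0 hsa h)
          · exact fun h => hs1 (Etrans 1 hpb (Esymm 1 h))
          · exact fun h => hab0 (Etrans 0 hsa h)
          · exact fun h => hq2 (Etrans 1 (Esymm 1 h) hb)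
          · exact fun h => hp2 (Esymm 0 h)
          · exact fun h => hab1 (Etrans 1 hpb h)
        · -- triple s q p
          refine T s q p ?_ ?_ ?_ ?_ ?_ ?_
          · exact fun h => hab0 (Etrans 0 hsa (Etrans 0 h (Esymm 0 hqb)))
          · exact hb
          · exact fun h => hp1 (Etrans 0 hsa h)
          · exact fun h => hs1 (Etrans 1 hpb (Esymm 1 h))
          · exact fun h => hp2 (Etrans 0 hqb h)
          · exact fun h => hq1 (Etrans 1 hpb (Esymm 1 h))
      · by_cases hr : E 0 s p
        · -- triple s a q
          refine T s a q ?_ ?_ ?_ ?_ ?_ ?_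
          · exact fun h => hp1 (Etrans 0 (Esymm 0 h) hr)
          · exact fun h => hs1 (Esymm 1 h)
          · exact fun h => hs2 (Etrans 0 hqb (Esymm 0 h))
          · exact fun h => hq2 (Etrans 1 hsb h)
          · exact fun h => hab0 (Etrans 0 h (Esymm 0 hqb))
          · exact hq1
        · -- triple s p q
          refine T s p q ?_ ?_ ?_ ?_ ?_ ?_
          · exact hr
          · exact fun h => hab1 (Etrans 1 hpb (Esymm 1 (Etrans 1 hsb h)))
          · exact fun h => hs2 (Etrans 0 hqb (Esymm 0 h))
          · exact fun h => hq2 (Etrans 1 hsb h)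
          · exact fun h => hp2 (Etrans 0 hqb (Esymm 0 h))
          · exact fun h => hq1 (Etrans 1 hpb h)
    -- (silence)
  have ⟨a⟩ : Nonempty V := Fintype.card_pos_iff.mp hn
  obtain ⟨b, hab0, hab1⟩ := N 0 1 a a
  obtain ⟨p, hp1, hp2⟩ := N 0 0 a b
  have hp : E 1 a p ∨ E 1 b p := by
    by_contra h
    push_neg at h
    exact T a b p hab0 hab1 hp1 h.1 hp2 h.2
  rcases hp with h | h
  · exact aux a b p hab0 hab1 hp1 hp2 h
  · exact aux b a p (fun h' => hab0 (Esymm 0 h')) (fun h' => hab1 (Esymm 1 h')) hp2 hp1 h
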